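/- Let n ∈ ℝ² be a unit vector and let v ∈ ℝ² be nonzero with v · n = 0, and let g, w ∈ ℝ² satisfy g · n = 0 and w · n = 0. For the dispersive part Dˡ_{ij}(v) = (d_l − d_t) v_i v_j / |v| of the Bear–Scheidegger tensor one has Σ_{k=1}^{2} n_k Σ_{i=1}^{2} (Σ_{j=1}^{2} ∂_{v_k} Dˡ_{ij}(v) g_j) w_i = 0. -/

import Mathlib

open scoped BigOperators

/-- Euclidean norm of a vector in ℝ². -/
noncomputable def norm2 (v : Fin 2 → ℝ) : ℝ := Real.sqrt (∑ i, v i ^ 2)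

/-- The dispersive part of the 2D Bear–Scheidegger tensor. -/
noncomputable def bsDl (dt dl : ℝ) (v : Fin 2 → ℝ) (i j : Fin 2) : ℝ :=
  (dl - dt) * v i * v j / norm2 v

/-- The partial derivative `∂_{v_k} Dˡ_{ij}(v)`. -/
noncomputable def pDl (dt dl : ℝ) (v : Fin 2 → ℝ) (i j k : Fin 2) : ℝ :=
  fderiv ℝ (fun u => bsDl dt dl u i j) v (Pi.single k 1)

lemma Qpos (v : Fin 2 → ℝ) (hv : v ≠ 0) : 0 < v 0 ^ 2 + v 1 ^ 2 := by
  obtain ⟨l, hl⟩ := Function.ne_iff.mp hv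
  fin_cases l <;> simp at hl <;> positivity

lemma norm2_pos (v : Fin 2 → ℝ) (hv : v ≠ 0) : 0 < norm2 v := by
  have := Qpos v hv
  simp only [norm2, Fin.sum_univ_two]
  exact Real.sqrt_pos.mpr this

lemma norm2_sq (v : Fin 2 → ℝ) : norm2 v ^ 2 = v 0 ^ 2 + v 1 ^ 2 := by
  simp only [norm2, Fin.sum_univ_two]
  exact Real.sq_sqrt (by positivity)

lemma pDl_eq (dt dl : ℝ) (v : Fin 2 → ℝ) (hv : v ≠ 0) (i j k : Fin 2) :
    pDl dt dl v i j k =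
      (dl - dt) * (((if j = k then v i else 0) + (if i = k then v j else 0))
        * (v 0 ^ 2 + v 1 ^ 2) - v i * v j * v k) / norm2 v ^ 3 := by
  have hQ : 0 < v 0 * v 0 + v 1 * v 1 := by have := Qpos v hv; nlinarith
  have hN : 0 < norm2 v := norm2_pos v hv
  let P : Fin 2 → (Fin 2 → ℝ) →L[ℝ] ℝ := fun m =>
    ContinuousLinearMap.proj (R := ℝ) (φ := fun _ : Fin 2 => ℝ) m
  have hproj : ∀ m : Fin 2, HasFDerivAt (fun u : Fin 2 → ℝ => u m) (P m) v := fun m =>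
    (ContinuousLinearMap.proj (R := ℝ) (φ := fun _ : Fin 2 => ℝ) m).hasFDerivAt
  have hQd := ((hproj 0).mul (hproj 0)).add ((hproj 1).mul (hproj 1))
  have hnum : HasFDerivAt (fun u : Fin 2 → ℝ => (dl - dt) * (u i * u j))
      ((dl - dt) • (v i • P j + v j • P i)) v :=
    HasFDerivAt.const_mul (𝕜 := ℝ) ((hproj i).mul (hproj j)) (dl - dt)
  have hden : Real.sqrt (v 0 * v 0 + v 1 * v 1) ≠ 0 :=
    (Real.sqrt_pos.mpr hQ).ne'
  have hinv := (HasDerivAt.inv (Real.hasDerivAt_sqrt hQ.ne') hden).comp_hasFDerivAt v hQd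
  have hf : HasFDerivAt (fun u => bsDl dt dl u i j)
      ((((dl - dt) * (v i * v j)) • ((-(1 / (2 * Real.sqrt (v 0 * v 0 + v 1 * v 1))) /
          Real.sqrt (v 0 * v 0 + v 1 * v 1) ^ 2) • (v 0 • P 0 + v 0 • P 0 + (v 1 • P 1 + v 1 • P 1))))
        + ((Real.sqrt (v 0 * v 0 + v 1 * v 1))⁻¹ • ((dl - dt) • (v i • P j + v j • P i)))) v := by
    have h := hnum.mul hinv
    refine HasFDerivAt.congr_of_eventuallyEq h ?_
    filter_upwards with u
    simp [bsDl, norm2, Fin.sum_univ_two, pow_two, mul_assoc, div_eq_mul_inv]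
  have hNeq : norm2 v = Real.sqrt (v 0 * v 0 + v 1 * v 1) := by
    simp [norm2, Fin.sum_univ_two, pow_two]
  rw [pDl, hf.fderiv]
  simp only [ContinuousLinearMap.smul_apply, ContinuousLinearMap.sub_apply,
    ContinuousLinearMap.add_apply, ContinuousLinearMap.coe_smul', Pi.smul_apply,
    ContinuousLinearMap.proj_apply, Pi.single_apply, smul_eq_mul, P, ← hNeq]
  have h2 : norm2 v ^ 2 = v 0 ^ 2 + v 1 ^ 2 := norm2_sq v
  fin_cases i <;> fin_cases j <;> fin_cases k <;>
    simp only [Fin.isValue, if_true, if_false, Fin.zero_eta, Fin.mk_one,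
      reduceIte, mul_one, mul_zero, one_mul, zero_add, add_zero,
        show (1 : Fin 2) ≠ 0 by decide, show (0 : Fin 2) ≠ 1 by decide] <;>
    field_simp <;> (try rw [← h2]) <;> ring

theorem stmt7 (dt dl : ℝ) (hdt : 0 < dt) (hdl : 0 < dl)
    (n v g w : Fin 2 → ℝ) (hn : ∑ i, n i ^ 2 = 1) (hv : v ≠ 0)
    (hvn : ∑ i, v i * n i = 0) (hgn : ∑ i, g i * n i = 0) (hwn : ∑ i, w i * n i = 0) :
    ∑ k, n k * ∑ i, (∑ j, pDl dt dl v i j k * g j) * w i = 0 := by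
  have hN : 0 < norm2 v := norm2_pos v hv
  have h1 : v 0 * n 0 + v 1 * n 1 = 0 := by simpa [Fin.sum_univ_two] using hvn
  have h2 : g 0 * n 0 + g 1 * n 1 = 0 := by simpa [Fin.sum_univ_two] using hgn
  have h3 : w 0 * n 0 + w 1 * n 1 = 0 := by simpa [Fin.sum_univ_two] using hwn
  have hNe : norm2 v ≠ 0 := hN.ne'
  have hsq : norm2 v ^ 2 = v 0 ^ 2 + v 1 ^ 2 := norm2_sq v
  simp only [Fin.sum_univ_two, pDl_eq dt dl v hv]
  norm_num
  apply mul_left_cancel₀ (pow_ne_zero 3 hNe)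
  rw [mul_zero]
  field_simp
  linear_combination
    (-( (dl - dt) * (v 0 * g 0 + v 1 * g 1) * (v 0 * w 0 + v 1 * w 1))) * h1
    + ((dl - dt) * (v 0 ^ 2 + v 1 ^ 2) * (v 0 * w 0 + v 1 * w 1)) * h2
    + ((dl - dt) * (v 0 ^ 2 + v 1 ^ 2) * (v 0 * g 0 + v 1 * g 1)) * h3
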